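/- Let α_1,…,α_m ∈ (0,1) with Σ_{i=1}^m α_i < 1. An integrable function f : [0,1]^m → ℂ satisfies ∫_{A_1 × ⋯ × A_m} f = 0 for all pairwise disjoint measurable sets A_1,…,A_m ⊆ [0,1] with λ(A_i) = α_i if and only if f = 0 almost everywhere. -/

import Mathlib

open MeasureTheory
open scoped ENNReal NNReal

/-- The unit cube `[0,1]^m` as a subset of `Fin m → ℝ`. -/
def unitCube (m : ℕ) : Set (Fin m → ℝ) := Set.univ.pi fun _ => Set.Icc (0 : ℝ) 1


lemma sierp {S : Set ℝ} (hSm : MeasurableSet S) (hS01 : S ⊆ Set.Icc (0:ℝ) 1)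
    {r : ℝ≥0∞} (hr : r ≤ volume S) :
    ∃ T, T ⊆ S ∧ MeasurableSet T ∧ volume T = r := by
  have hfin : volume S ≤ 1 := by
    calc volume S ≤ volume (Set.Icc (0:ℝ) 1) := measure_mono hS01
    _ = 1 := by simp [Real.volume_Icc]
  have hSne : volume S ≠ ∞ := (lt_of_le_of_lt hfin (by norm_num)).ne
  have hrne : r ≠ ∞ := (lt_of_le_of_lt (hr.trans hfin) (by norm_num)).ne
  set g : ℝ → ℝ := fun t => (volume (S ∩ Set.Iic t)).toReal with hg
  have hfin' : ∀ t, volume (S ∩ Set.Iic t) ≠ ∞ :=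
    fun t => ((measure_mono Set.inter_subset_left).trans_lt (lt_of_le_of_lt hfin (by norm_num))).ne
  have hmono : ∀ {s t : ℝ}, s ≤ t → g s ≤ g t := by
    intro s t hst
    exact ENNReal.toReal_mono (hfin' t) (measure_mono (Set.inter_subset_inter_right _ (Set.Iic_subset_Iic.2 hst)))
  have hlip : ∀ s t : ℝ, s ≤ t → g t - g s ≤ t - s := by
    intro s t hst
    have h1 : S ∩ Set.Iic t ⊆ (S ∩ Set.Iic s) ∪ Set.Ioc s t := by
      intro x hx
      rcases le_or_gt x s with h | h
      · exact Or.inl ⟨hx.1, h⟩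
      · exact Or.inr ⟨h, hx.2⟩
    have h2 : volume (S ∩ Set.Iic t) ≤ volume (S ∩ Set.Iic s) + ENNReal.ofReal (t - s) := by
      calc volume (S ∩ Set.Iic t) ≤ volume ((S ∩ Set.Iic s) ∪ Set.Ioc s t) := measure_mono h1
      _ ≤ volume (S ∩ Set.Iic s) + volume (Set.Ioc s t) := measure_union_le _ _
      _ = volume (S ∩ Set.Iic s) + ENNReal.ofReal (t - s) := by rw [Real.volume_Ioc]
    have h3 := ENNReal.toReal_mono (by exact ENNReal.add_ne_top.2 ⟨hfin' s, ENNReal.ofReal_ne_top⟩) h2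
    rw [ENNReal.toReal_add (hfin' s) ENNReal.ofReal_ne_top, ENNReal.toReal_ofReal (by linarith)] at h3
    simpa [hg] using by linarith
  have hcont : Continuous g := by
    apply LipschitzWith.continuous (K := 1)
    apply LipschitzWith.of_dist_le_mul
    intro s t
    rw [Real.dist_eq, Real.dist_eq]
    push_cast
    rw [one_mul]
    rcases le_total s t with h | h
    · rw [abs_sub_comm, abs_of_nonneg (by linarith [hmono h]), abs_of_nonpos (by linarith)]
      linarith [hlip s t h]
    · rw [abs_of_nonneg (by linarith [hmono h]), abs_of_nonneg (by linarith)]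
      linarith [hlip t s h]
  have hg0 : g 0 = 0 := by
    have : S ∩ Set.Iic 0 ⊆ {0} := by
      intro x hx
      have := (hS01 hx.1).1
      have := hx.2
      simp only [Set.mem_singleton_iff]
      linarith [Set.mem_Iic.mp hx.2]
    have h0 : volume (S ∩ Set.Iic 0) ≤ volume ({0} : Set ℝ) := measure_mono this
    simp only [measure_singleton, le_zero_iff] at h0
    simp [hg, h0]
  have hg1 : g 1 = (volume S).toReal := by
    have : S ∩ Set.Iic 1 = S := Set.inter_eq_self_of_subset_left (fun x hx => (hS01 hx).2)
    simp [hg, this]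
  have hmem : r.toReal ∈ Set.Icc (g 0) (g 1) := by
    constructor
    · rw [hg0]; exact ENNReal.toReal_nonneg
    · rw [hg1]; exact ENNReal.toReal_mono hSne hr
  obtain ⟨t, _, hgt⟩ := intermediate_value_Icc (by norm_num : (0:ℝ) ≤ 1) hcont.continuousOn hmem
  refine ⟨S ∩ Set.Iic t, Set.inter_subset_left, hSm.inter measurableSet_Iic, ?_⟩
  have := hgt
  rw [hg] at this
  rw [← ENNReal.toReal_eq_toReal_iff' (hfin' t) hrne] at *
  exact this


section Key1D

variable {S : Set ℝ} {ν : Set ℝ → ℂ}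

lemma nu_empty (hadd : ∀ E F, E ⊆ S → F ⊆ S → MeasurableSet E → MeasurableSet F → Disjoint E F →
      ν (E ∪ F) = ν E + ν F) : ν ∅ = 0 := by
  have := hadd ∅ ∅ (Set.empty_subset S) (Set.empty_subset S) MeasurableSet.empty
    MeasurableSet.empty disjoint_bot_left
  simp only [Set.union_empty] at this
  exact (left_eq_add.mp this)

lemma nu_biUnion (hadd : ∀ E F, E ⊆ S → F ⊆ S → MeasurableSet E → MeasurableSet F → Disjoint E F →
      ν (E ∪ F) = ν E + ν F)
    {ι : Type*} [DecidableEq ι] (t : Finset ι) (g : ι → Set ℝ)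
    (hsub : ∀ i ∈ t, g i ⊆ S) (hm : ∀ i ∈ t, MeasurableSet (g i))
    (hd : Set.Pairwise ↑t (Function.onFun Disjoint g)) :
    ν (⋃ i ∈ t, g i) = ∑ i ∈ t, ν (g i) := by
  induction t using Finset.induction with
  | empty => simpa using nu_empty hadd
  | @insert b s hnotmem ih =>
    rw [Finset.set_biUnion_insert, Finset.sum_insert hnotmem]
    rw [hadd (g b) (⋃ i ∈ s, g i) (hsub b (Finset.mem_insert_self b s))
      (Set.iUnion₂_subset fun i hi => hsub i (Finset.mem_insert_of_mem hi))
      (hm b (Finset.mem_insert_self b s))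
      (s.measurableSet_biUnion fun i hi => hm i (Finset.mem_insert_of_mem hi)) ?_,
      ih (fun i hi => hsub i (Finset.mem_insert_of_mem hi))
        (fun i hi => hm i (Finset.mem_insert_of_mem hi))
        (hd.mono (by intro x hx; simp only [Finset.coe_insert, Set.mem_insert_iff]; exact Or.inr hx))]
    · rw [Set.disjoint_iUnion₂_right]
      intro i hi
      exact hd (by simp) (by simp [hi]) (by rintro rfl; exact hnotmem hi)

/-- a disjoint family of `k` subsets of `R`, each of measure `u`. -/
lemma fam {u : ℝ≥0∞} : ∀ (k : ℕ) (R : Set ℝ), MeasurableSet R → R ⊆ Set.Icc (0:ℝ) 1 →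
    (k : ℝ≥0∞) * u ≤ volume R →
    ∃ g : Fin k → Set ℝ, (∀ i, g i ⊆ R) ∧ (∀ i, MeasurableSet (g i)) ∧
      (∀ i, volume (g i) = u) ∧ Pairwise (Function.onFun Disjoint g) := by
  intro k
  induction k with
  | zero =>
    intro R _ _ _
    exact ⟨Fin.elim0, fun i => i.elim0, fun i => i.elim0, fun i => i.elim0,
      fun i => i.elim0⟩
  | succ k ih =>
    intro R hRm hR01 hle
    have hu1 : ((1:ℕ) : ℝ≥0∞) * u ≤ volume R :=
      le_trans (mul_le_mul_left (by exact_mod_cast Nat.succ_le_succ (Nat.zero_le k)) u) hle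
    have huR : u ≤ volume R := by simpa using hu1
    have hvolR : volume R ≠ ∞ := by
      have : volume R ≤ 1 := by
        calc volume R ≤ volume (Set.Icc (0:ℝ) 1) := measure_mono hR01
        _ = 1 := by simp [Real.volume_Icc]
      exact (lt_of_le_of_lt this (by norm_num)).ne
    have hune : u ≠ ∞ := (lt_of_le_of_lt huR (lt_of_le_of_lt le_rfl hvolR.lt_top)).ne
    obtain ⟨T, hTR, hTm, hTv⟩ := sierp hRm hR01 huR
    have hdiff : (k : ℝ≥0∞) * u ≤ volume (R \ T) := by
      rw [measure_diff hTR hTm.nullMeasurableSet (by rw [hTv]; exact hune), hTv]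
      apply ENNReal.le_sub_of_add_le_right hune
      calc (k : ℝ≥0∞) * u + u = ((k+1 : ℕ) : ℝ≥0∞) * u := by push_cast; ring
      _ ≤ volume R := hle
    obtain ⟨g', hg'sub, hg'm, hg'v, hg'd⟩ := ih (R \ T) (hRm.diff hTm)
      ((Set.diff_subset).trans hR01) hdiff
    refine ⟨Fin.cons T g', ?_, ?_, ?_, ?_⟩
    · intro i
      refine Fin.cases ?_ ?_ i
      · exact hTR
      · exact fun j => (hg'sub j).trans Set.diff_subset
    · intro i
      refine Fin.cases ?_ ?_ i
      · exact hTm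
      · exact fun j => hg'm j
    · intro i
      refine Fin.cases ?_ ?_ i
      · exact hTv
      · exact fun j => hg'v j
    · intro i j hij
      rcases Fin.eq_zero_or_eq_succ i with rfl | ⟨i', rfl⟩ <;>
        rcases Fin.eq_zero_or_eq_succ j with rfl | ⟨j', rfl⟩
      · exact absurd rfl hij
      · simpa [Function.onFun] using
          Set.disjoint_of_subset le_rfl (hg'sub j') Set.disjoint_sdiff_right
      · simpa [Function.onFun] using
          (Set.disjoint_of_subset le_rfl (hg'sub i') Set.disjoint_sdiff_right).symm
      · simpa [Function.onFun] using hg'd (fun h => hij (congrArg Fin.succ h))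

end Key1D


lemma key1D {S : Set ℝ} (hSm : MeasurableSet S) (hS01 : S ⊆ Set.Icc (0:ℝ) 1)
    {a : ℝ≥0∞} (ha0 : a ≠ 0) (haS : a < volume S) {ν : Set ℝ → ℂ}
    (hadd : ∀ E F, E ⊆ S → F ⊆ S → MeasurableSet E → MeasurableSet F → Disjoint E F →
      ν (E ∪ F) = ν E + ν F)
    (hcont : ∀ ε : ℝ, 0 < ε → ∃ δ : ℝ≥0∞, 0 < δ ∧ ∀ E, E ⊆ S → MeasurableSet E →
      volume E < δ → ‖ν E‖ < ε)
    (hvan : ∀ A, A ⊆ S → MeasurableSet A → volume A = a → ν A = 0) :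
    ∀ E, E ⊆ S → MeasurableSet E → ν E = 0 := by
  have hL1 : volume S ≤ 1 := by
    calc volume S ≤ volume (Set.Icc (0:ℝ) 1) := measure_mono hS01
    _ = 1 := by simp [Real.volume_Icc]
  have hLne : volume S ≠ ∞ := (lt_of_le_of_lt hL1 (by norm_num)).ne
  have hane : a ≠ ∞ := ((haS.trans_le hL1).trans (by norm_num)).ne
  have hzero : ∀ F, F ⊆ S → MeasurableSet F → volume F = 0 → ν F = 0 := by
    intro F hFS hFm hFv
    rw [← norm_eq_zero]
    by_contra hne
    have hpos : 0 < ‖ν F‖ := lt_of_le_of_ne (norm_nonneg _) (Ne.symm hne)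
    obtain ⟨δ, hδ0, hδ⟩ := hcont _ hpos
    exact absurd (hδ F hFS hFm (by rw [hFv]; exact hδ0)) (lt_irrefl _)
  set aR := a.toReal with haRdef
  set LR := (volume S).toReal with hLRdef
  have haRpos : 0 < aR := ENNReal.toReal_pos ha0 hane
  have haLR : aR < LR := (ENNReal.toReal_lt_toReal hane hLne).mpr haS
  -- facts about u = a / n for good n
  have hufacts : ∀ n : ℕ, aR / (LR - aR) < (n:ℝ) →
      0 < n ∧ (a / n ≠ ∞) ∧ (a / n ≠ 0) ∧ ((a / n).toReal = aR / n) ∧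
        (n : ℝ≥0∞) * (a / n) = a ∧ a + a / n ≤ volume S := by
    intro n hn
    have hnpos : 0 < n := by
      rcases Nat.eq_zero_or_pos n with rfl | h
      · exfalso
        have := div_pos haRpos (by linarith : (0:ℝ) < LR - aR)
        simp only [Nat.cast_zero] at hn
        linarith
      · exact h
    have hnR : (0:ℝ) < n := by exact_mod_cast hnpos
    have hune : a / n ≠ ∞ := by
      rw [div_eq_mul_inv]
      exact ENNReal.mul_ne_top hane (ENNReal.inv_ne_top.2 (by exact_mod_cast hnpos.ne'))
    have hu0 : a / n ≠ 0 := (ENNReal.div_pos ha0 (ENNReal.natCast_ne_top n)).ne'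
    have huR : (a / n).toReal = aR / n := by
      rw [ENNReal.toReal_div]; simp [haRdef]
    have hnu : (n : ℝ≥0∞) * (a / n) = a :=
      ENNReal.mul_div_cancel (by exact_mod_cast hnpos.ne') (ENNReal.natCast_ne_top n)
    have hlt : aR / n < LR - aR := by
      rw [div_lt_iff₀ hnR]
      have := (div_lt_iff₀ (by linarith : (0:ℝ) < LR - aR)).mp hn
      nlinarith
    have hau : a + a / n ≤ volume S := by
      have hfin : a + a / n ≠ ∞ := ENNReal.add_ne_top.2 ⟨hane, hune⟩
      have : (a + a / n).toReal < LR := by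
        rw [ENNReal.toReal_add hane hune, huR]
        linarith
      exact le_of_lt ((ENNReal.toReal_lt_toReal hfin hLne).mp this)
    exact ⟨hnpos, hune, hu0, huR, hnu, hau⟩
  -- the piece lemma
  have piece : ∀ n : ℕ, aR / (LR - aR) < (n:ℝ) → ∀ E', E' ⊆ S → MeasurableSet E' →
      volume E' = a / n → ν E' = 0 := by
    intro n hn E' hE'S hE'm hE'v
    obtain ⟨hnpos, hune, hu0, huR, hnu, hau⟩ := hufacts n hn
    have hSdiff : (n : ℝ≥0∞) * (a / n) ≤ volume (S \ E') := by
      rw [measure_diff hE'S hE'm.nullMeasurableSet (hE'v ▸ hune), hE'v, hnu]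
      exact ENNReal.le_sub_of_add_le_right hune hau
    obtain ⟨g', hg'sub, hg'm, hg'v, hg'd⟩ := fam n (S \ E') (hSm.diff hE'm)
      (Set.diff_subset.trans hS01) hSdiff
    set g : Fin (n+1) → Set ℝ := Fin.cons E' g' with hgdef
    have hgsub : ∀ i, g i ⊆ S := by
      intro i
      rcases Fin.eq_zero_or_eq_succ i with rfl | ⟨i', rfl⟩
      · simpa [hgdef] using hE'S
      · simpa [hgdef] using (hg'sub i').trans Set.diff_subset
    have hgm : ∀ i, MeasurableSet (g i) := by
      intro i
      rcases Fin.eq_zero_or_eq_succ i with rfl | ⟨i', rfl⟩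
      · simpa [hgdef] using hE'm
      · simpa [hgdef] using hg'm i'
    have hgv : ∀ i, volume (g i) = a / n := by
      intro i
      rcases Fin.eq_zero_or_eq_succ i with rfl | ⟨i', rfl⟩
      · simpa [hgdef] using hE'v
      · simpa [hgdef] using hg'v i'
    have hgd : Pairwise (Function.onFun Disjoint g) := by
      intro i j hij
      rcases Fin.eq_zero_or_eq_succ i with rfl | ⟨i', rfl⟩ <;>
        rcases Fin.eq_zero_or_eq_succ j with rfl | ⟨j', rfl⟩
      · exact absurd rfl hij
      · simpa [hgdef, Function.onFun] using
          Set.disjoint_of_subset le_rfl (hg'sub j') Set.disjoint_sdiff_right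
      · simpa [hgdef, Function.onFun] using
          (Set.disjoint_of_subset le_rfl (hg'sub i') Set.disjoint_sdiff_right).symm
      · simpa [hgdef, Function.onFun] using hg'd (fun h => hij (congrArg Fin.succ h))
    have hsum_erase : ∀ j : Fin (n+1), ∑ i ∈ Finset.univ.erase j, ν (g i) = 0 := by
      intro j
      have hbi := nu_biUnion hadd (Finset.univ.erase j) g (fun i _ => hgsub i)
        (fun i _ => hgm i) (hgd.set_pairwise _)
      have hvol : volume (⋃ i ∈ Finset.univ.erase j, g i) = a := by
        rw [measure_biUnion_finset (hgd.set_pairwise _) (fun i _ => hgm i)]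
        rw [Finset.sum_congr rfl (fun i _ => hgv i), Finset.sum_const,
          Finset.card_erase_of_mem (Finset.mem_univ j), Finset.card_univ, Fintype.card_fin]
        simp only [Nat.add_sub_cancel, nsmul_eq_mul]
        exact hnu
      rw [← hbi]
      exact hvan _ (Set.iUnion₂_subset fun i _ => hgsub i)
        ((Finset.univ.erase j).measurableSet_biUnion fun i _ => hgm i) hvol
    set T := ∑ i, ν (g i) with hTdef
    have hTj : ∀ j, ν (g j) = T := by
      intro j
      have := Finset.add_sum_erase Finset.univ (fun i => ν (g i)) (Finset.mem_univ j)
      rw [hsum_erase j, add_zero] at this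
      exact this
    have hT0 : T = 0 := by
      have h1 : T = (n+1 : ℕ) * T := by
        conv_lhs => rw [hTdef, Finset.sum_congr rfl (fun j _ => hTj j), Finset.sum_const,
          Finset.card_univ, Fintype.card_fin, nsmul_eq_mul]
      have h2 : (n : ℂ) * T = 0 := by push_cast at h1 ⊢; linear_combination -h1
      rcases mul_eq_zero.mp h2 with h | h
      · exact absurd h (by exact_mod_cast hnpos.ne')
      · exact h
    have := hTj 0
    rw [hT0] at this
    simpa [hgdef] using this
  -- the chopping lemma
  have chop : ∀ n : ℕ, aR / (LR - aR) < (n:ℝ) → ∀ (k : ℕ) (F : Set ℝ), F ⊆ S →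
      MeasurableSet F → volume F = (k : ℝ≥0∞) * (a / n) → ν F = 0 := by
    intro n hn k
    induction k with
    | zero =>
      intro F h1 h2 h3
      exact hzero F h1 h2 (by simpa using h3)
    | succ k ih =>
      intro F hFS hFm hFv
      obtain ⟨hnpos, hune, hu0, huR, hnu, hau⟩ := hufacts n hn
      have hule : a / n ≤ volume F := by
        rw [hFv]
        calc a / n = (1 : ℝ≥0∞) * (a / n) := (one_mul _).symm
        _ ≤ ((k+1 : ℕ) : ℝ≥0∞) * (a / n) :=
            mul_le_mul_left (by exact_mod_cast Nat.succ_le_succ (Nat.zero_le k)) _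
      obtain ⟨Tp, hTF, hTm, hTv⟩ := sierp hFm (hFS.trans hS01) hule
      have hνT : ν Tp = 0 := piece n hn Tp (hTF.trans hFS) hTm hTv
      have hsplit : ν F = ν Tp + ν (F \ Tp) := by
        rw [← hadd Tp (F \ Tp) (hTF.trans hFS) (Set.diff_subset.trans hFS) hTm
          (hFm.diff hTm) Set.disjoint_sdiff_right, Set.union_diff_cancel hTF]
      have hvdiff : volume (F \ Tp) = (k : ℝ≥0∞) * (a / n) := by
        rw [measure_diff hTF hTm.nullMeasurableSet (hTv ▸ hune), hTv, hFv]
        rw [Nat.cast_succ, add_mul, one_mul, ENNReal.add_sub_cancel_right hune]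
      rw [hsplit, hνT, zero_add]
      exact ih (F \ Tp) (Set.diff_subset.trans hFS) (hFm.diff hTm) hvdiff
  -- conclusion
  intro E hES hEm
  have key : ∀ ε : ℝ, 0 < ε → ‖ν E‖ < ε := by
    intro ε hε
    obtain ⟨δ, hδ0, hδ⟩ := hcont ε hε
    set δ' := min δ 1 with hδ'def
    have hδ'0 : 0 < δ' := lt_min hδ0 (by norm_num)
    have hδ'ne : δ' ≠ ∞ := ((min_le_right _ _).trans_lt (by norm_num)).ne
    have hδ'R : 0 < δ'.toReal := ENNReal.toReal_pos hδ'0.ne' hδ'ne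
    obtain ⟨n, hn⟩ := exists_nat_gt (max (aR / (LR - aR)) (aR / δ'.toReal))
    have hn1 : aR / (LR - aR) < (n:ℝ) := lt_of_le_of_lt (le_max_left _ _) hn
    have hn2 : aR / δ'.toReal < (n:ℝ) := lt_of_le_of_lt (le_max_right _ _) hn
    obtain ⟨hnpos, hune, hu0, huR, hnu, hau⟩ := hufacts n hn1
    have hnR : (0:ℝ) < n := by exact_mod_cast hnpos
    have huRpos : 0 < (a / (n:ℕ) : ℝ≥0∞).toReal := by
      rw [huR]; exact div_pos haRpos hnR
    have huδ : a / n < δ' := by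
      rw [← ENNReal.toReal_lt_toReal hune hδ'ne, huR, div_lt_iff₀ hnR]
      have := (div_lt_iff₀ hδ'R).mp hn2
      nlinarith
    have hEne : volume E ≠ ∞ := ((measure_mono hES).trans_lt hLne.lt_top).ne
    set eR := (volume E).toReal with heRdef
    set k := ⌊eR / (a / (n:ℕ) : ℝ≥0∞).toReal⌋₊ with hkdef
    have hk1 : (k:ℝ) * (a / (n:ℕ) : ℝ≥0∞).toReal ≤ eR := by
      have hfl := Nat.floor_le (div_nonneg ENNReal.toReal_nonneg ENNReal.toReal_nonneg :
        0 ≤ eR / (a / (n:ℕ) : ℝ≥0∞).toReal)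
      calc (k:ℝ) * (a / (n:ℕ) : ℝ≥0∞).toReal
          ≤ (eR / (a / (n:ℕ) : ℝ≥0∞).toReal) * (a / (n:ℕ) : ℝ≥0∞).toReal :=
            mul_le_mul_of_nonneg_right hfl ENNReal.toReal_nonneg
        _ = eR := div_mul_cancel₀ _ huRpos.ne'
    have hk2 : eR < ((k:ℝ)+1) * (a / (n:ℕ) : ℝ≥0∞).toReal := by
      have hfl := Nat.lt_floor_add_one (eR / (a / (n:ℕ) : ℝ≥0∞).toReal)
      calc eR = (eR / (a / (n:ℕ) : ℝ≥0∞).toReal) * (a / (n:ℕ) : ℝ≥0∞).toReal :=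
            (div_mul_cancel₀ _ huRpos.ne').symm
        _ < ((k:ℝ)+1) * (a / (n:ℕ) : ℝ≥0∞).toReal := by
            apply mul_lt_mul_of_pos_right _ huRpos
            exact_mod_cast hfl
    have hkune : (k : ℝ≥0∞) * (a / n) ≠ ∞ :=
      ENNReal.mul_ne_top (ENNReal.natCast_ne_top k) hune
    have hkle : (k : ℝ≥0∞) * (a / n) ≤ volume E := by
      rw [← ENNReal.toReal_le_toReal hkune hEne, ENNReal.toReal_mul, ENNReal.toReal_natCast]
      exact hk1
    obtain ⟨F, hFE, hFm, hFv⟩ := sierp hEm (hES.trans hS01) hkle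
    have hνF : ν F = 0 := chop n hn1 k F (hFE.trans hES) hFm hFv
    have hsplit : ν E = ν F + ν (E \ F) := by
      rw [← hadd F (E \ F) (hFE.trans hES) (Set.diff_subset.trans hES) hFm
        (hEm.diff hFm) Set.disjoint_sdiff_right, Set.union_diff_cancel hFE]
    have hdiffu : volume (E \ F) < a / n := by
      rw [measure_diff hFE hFm.nullMeasurableSet (hFv ▸ hkune), hFv]
      have hsubne : volume E - (k : ℝ≥0∞) * (a / n) ≠ ∞ :=
        (tsub_le_self.trans_lt hEne.lt_top).ne
      rw [← ENNReal.toReal_lt_toReal hsubne hune, ENNReal.toReal_sub_of_le hkle hEne,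
        ENNReal.toReal_mul, ENNReal.toReal_natCast]
      have : eR - (k:ℝ) * (a / (n:ℕ) : ℝ≥0∞).toReal < (a / (n:ℕ) : ℝ≥0∞).toReal := by
        nlinarith
      exact this
    have hdiffδ : volume (E \ F) < δ := hdiffu.trans (huδ.trans_le (min_le_left _ _))
    rw [hsplit, hνF, zero_add]
    exact hδ (E \ F) (Set.diff_subset.trans hES) (hEm.diff hFm) hdiffδ
  rw [← norm_eq_zero]
  by_contra hne
  have hpos : 0 < ‖ν E‖ := lt_of_le_of_ne (norm_nonneg _) (Ne.symm hne)
  exact absurd (key _ hpos) (lt_irrefl _)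



section Bridge

variable {m : ℕ}

lemma mem_pi_update {C : Fin m → Set ℝ} {k : Fin m} {G : Set ℝ} {x : Fin m → ℝ} :
    x ∈ Set.univ.pi (Function.update C k G) ↔ x k ∈ G ∧ ∀ i, i ≠ k → x i ∈ C i := by
  simp only [Set.mem_univ_pi, Function.update_apply]
  constructor
  · intro h
    refine ⟨by simpa using h k, fun i hi => ?_⟩
    have := h i
    rwa [if_neg hi] at this
  · rintro ⟨h1, h2⟩ i
    by_cases hi : i = k
    · subst hi; simp [h1]
    · rw [if_neg hi]; exact h2 i hi

lemma meas_update {C : Fin m → Set ℝ} (hC : ∀ i, MeasurableSet (C i)) {k : Fin m} {G : Set ℝ}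
    (hG : MeasurableSet G) : ∀ i, MeasurableSet (Function.update C k G i) := by
  intro i
  rcases eq_or_ne i k with rfl | h
  · simpa using hG
  · rw [Function.update_of_ne h]; exact hC i

lemma sub_update {C : Fin m → Set ℝ} (hC : ∀ i, C i ⊆ Set.Icc (0:ℝ) 1) {k : Fin m} {G : Set ℝ}
    (hG : G ⊆ Set.Icc (0:ℝ) 1) :
    Set.univ.pi (Function.update C k G) ⊆ unitCube m := by
  apply Set.pi_mono
  intro i _
  rcases eq_or_ne i k with rfl | h
  · simpa using hG
  · rw [Function.update_of_ne h]; exact hC i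

lemma cube_meas : MeasurableSet (unitCube m) :=
  MeasurableSet.univ_pi fun _ => measurableSet_Icc

/-- global absolute continuity of the integral of `f` over subsets of the cube -/
lemma gcont {f : (Fin m → ℝ) → ℂ} (hf : IntegrableOn f (unitCube m)) :
    ∀ ε : ℝ, 0 < ε → ∃ δ : ℝ≥0∞, 0 < δ ∧ ∀ s : Set (Fin m → ℝ), MeasurableSet s →
      s ⊆ unitCube m → volume s < δ → ‖∫ x in s, f x‖ < ε := by
  intro ε hε
  have hfin : (∫⁻ x, ‖f x‖₊ ∂(volume.restrict (unitCube m))) < ∞ := hf.2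
  obtain ⟨δ, hδ0, hδ⟩ := exists_pos_setLIntegral_lt_of_measure_lt
    (μ := volume.restrict (unitCube m)) hfin.ne
    (hε := (ENNReal.ofReal_pos.mpr hε).ne')
  refine ⟨δ, hδ0, ?_⟩
  intro s hsm hsc hsv
  have hμs : (volume.restrict (unitCube m)) s < δ := by
    rw [Measure.restrict_apply hsm]
    exact lt_of_le_of_lt (measure_mono Set.inter_subset_left) hsv
  have hint := hδ s hμs
  have hrr : ∫ x in s, f x = ∫ x in s, f x ∂(volume.restrict (unitCube m)) := by
    rw [Measure.restrict_restrict hsm, Set.inter_eq_self_of_subset_left hsc]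
  rw [hrr]
  calc ‖∫ x in s, f x ∂(volume.restrict (unitCube m))‖
      ≤ (∫⁻ x in s, ENNReal.ofReal ‖f x‖ ∂(volume.restrict (unitCube m))).toReal :=
        norm_integral_le_lintegral_norm f
    _ < ε := by
        have heq : (∫⁻ x in s, ENNReal.ofReal ‖f x‖ ∂(volume.restrict (unitCube m)))
            = ∫⁻ x in s, (‖f x‖₊ : ℝ≥0∞) ∂(volume.restrict (unitCube m)) := by
          congr 1
          ext x
          exact ofReal_norm_eq_enorm (f x)
        rw [heq]
        have hne : (∫⁻ x in s, (‖f x‖₊ : ℝ≥0∞) ∂(volume.restrict (unitCube m))) ≠ ∞ :=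
          (hint.trans_le le_top).ne
        calc (∫⁻ x in s, (‖f x‖₊ : ℝ≥0∞) ∂(volume.restrict (unitCube m))).toReal
            < (ENNReal.ofReal ε).toReal := by
              exact (ENNReal.toReal_lt_toReal hne ENNReal.ofReal_ne_top).mpr hint
          _ = ε := ENNReal.toReal_ofReal hε.le

variable (α : Fin m → ℝ) (f : (Fin m → ℝ) → ℂ)

lemma lemA (hα : ∀ i, α i ∈ Set.Ioo (0:ℝ) 1) (hsum : ∑ i, α i < 1)
    (hf : IntegrableOn f (unitCube m))
    (hyp : ∀ A : Fin m → Set ℝ, (∀ i, MeasurableSet (A i)) →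
      (∀ i, A i ⊆ Set.Icc (0:ℝ) 1) →
      (∀ i j, i ≠ j → Disjoint (A i) (A j)) →
      (∀ i, volume (A i) = ENNReal.ofReal (α i)) →
      ∫ x in Set.univ.pi A, f x = 0) :
    ∀ (T : Finset (Fin m)) (C : Fin m → Set ℝ), (∀ i, MeasurableSet (C i)) →
      (∀ i, C i ⊆ Set.Icc (0:ℝ) 1) → (∀ i j, i ≠ j → Disjoint (C i) (C j)) →
      (∀ i ∉ T, volume (C i) = ENNReal.ofReal (α i)) →
      (∀ i ∈ T, volume (C i) ≤ ENNReal.ofReal (α i)) →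
      ∫ x in Set.univ.pi C, f x = 0 := by
  intro T
  induction T using Finset.induction with
  | empty =>
    intro C h1 h2 h3 h4 _
    exact hyp C h1 h2 h3 (fun i => h4 i (Finset.notMem_empty i))
  | @insert k T hkT ih =>
    intro C hCm hC01 hCd hCeq hCle
    classical
    set U : Set ℝ := ⋃ i ∈ Finset.univ.erase k, C i with hUdef
    have hUm : MeasurableSet U := (Finset.univ.erase k).measurableSet_biUnion fun i _ => hCm i
    have hU01 : U ⊆ Set.Icc (0:ℝ) 1 := Set.iUnion₂_subset fun i _ => hC01 i
    set S : Set ℝ := Set.Icc (0:ℝ) 1 \ U with hSdef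
    have hSm : MeasurableSet S := measurableSet_Icc.diff hUm
    have hS01 : S ⊆ Set.Icc (0:ℝ) 1 := Set.diff_subset
    have hCkS : C k ⊆ S := by
      intro x hx
      refine ⟨hC01 k hx, ?_⟩
      intro hxU
      obtain ⟨i, hi, hxi⟩ := Set.mem_iUnion₂.mp hxU
      have hik : i ≠ k := (Finset.mem_erase.mp hi).1
      exact Set.disjoint_left.mp (hCd k i hik.symm) hx hxi
    -- volume estimates
    have hU1 : volume U ≤ 1 := by
      calc volume U ≤ volume (Set.Icc (0:ℝ) 1) := measure_mono hU01
      _ = 1 := by simp [Real.volume_Icc]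
    have hUv : volume U = ∑ i ∈ Finset.univ.erase k, volume (C i) :=
      measure_biUnion_finset
        (fun i _ j _ hij => hCd i j hij) (fun i _ => hCm i)
    have hUle : volume U ≤ ENNReal.ofReal (∑ i ∈ Finset.univ.erase k, α i) := by
      rw [hUv, ENNReal.ofReal_sum_of_nonneg (fun i _ => (hα i).1.le)]
      apply Finset.sum_le_sum
      intro i hi
      have hik : i ≠ k := (Finset.mem_erase.mp hi).1
      by_cases hiT : i ∈ T
      · exact hCle i (Finset.mem_insert_of_mem hiT)
      · exact le_of_eq (hCeq i (by simp [hik, hiT]))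
    have hvolS : ENNReal.ofReal (α k) < volume S := by
      have hvS : volume S = 1 - volume U := by
        rw [hSdef, measure_diff hU01 hUm.nullMeasurableSet (hU1.trans_lt (by norm_num)).ne]
        simp [Real.volume_Icc]
      rw [hvS]
      rw [(ENNReal.cancel_of_ne (hU1.trans_lt (by norm_num)).ne).lt_tsub_iff_right]
      calc ENNReal.ofReal (α k) + volume U
          ≤ ENNReal.ofReal (α k) + ENNReal.ofReal (∑ i ∈ Finset.univ.erase k, α i) :=
            add_le_add le_rfl hUle
        _ = ENNReal.ofReal (α k + ∑ i ∈ Finset.univ.erase k, α i) :=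
            (ENNReal.ofReal_add (hα k).1.le
              (Finset.sum_nonneg fun i _ => (hα i).1.le)).symm
        _ < 1 := by
            rw [← ENNReal.ofReal_one]
            apply ENNReal.ofReal_lt_ofReal_iff_of_nonneg
              (add_nonneg (hα k).1.le (Finset.sum_nonneg fun i _ => (hα i).1.le)) |>.mpr
            rw [Finset.add_sum_erase Finset.univ α (Finset.mem_univ k)]
            exact hsum
    set ν : Set ℝ → ℂ := fun G => ∫ x in Set.univ.pi (Function.update C k G), f x with hνdef
    have hint : ∀ G : Set ℝ, G ⊆ Set.Icc (0:ℝ) 1 →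
        IntegrableOn f (Set.univ.pi (Function.update C k G)) :=
      fun G hG => hf.mono_set (sub_update hC01 hG)
    have hadd : ∀ E F, E ⊆ S → F ⊆ S → MeasurableSet E → MeasurableSet F → Disjoint E F →
        ν (E ∪ F) = ν E + ν F := by
      intro E F hES hFS hEm hFm hEF
      have hunion : Set.univ.pi (Function.update C k (E ∪ F)) =
          Set.univ.pi (Function.update C k E) ∪ Set.univ.pi (Function.update C k F) := by
        ext x
        simp only [mem_pi_update, Set.mem_union]
        tauto
      have hdisj : Disjoint (Set.univ.pi (Function.update C k E))
          (Set.univ.pi (Function.update C k F)) := by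
        rw [Set.disjoint_left]
        intro x hx hx'
        exact Set.disjoint_left.mp hEF (mem_pi_update.mp hx).1 (mem_pi_update.mp hx').1
      rw [hνdef]
      simp only
      rw [hunion, setIntegral_union hdisj
        (MeasurableSet.univ_pi (meas_update hCm hFm))
        (hint E (hES.trans hS01)) (hint F (hFS.trans hS01))]
    have hcont : ∀ ε : ℝ, 0 < ε → ∃ δ : ℝ≥0∞, 0 < δ ∧ ∀ E, E ⊆ S → MeasurableSet E →
        volume E < δ → ‖ν E‖ < ε := by
      intro ε hε
      obtain ⟨δ, hδ0, hδ⟩ := gcont hf ε hε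
      refine ⟨δ, hδ0, ?_⟩
      intro E hES hEm hEv
      apply hδ _ (MeasurableSet.univ_pi (meas_update hCm hEm))
        (sub_update hC01 (hES.trans hS01))
      have hprod : volume (Set.univ.pi (Function.update C k E))
          = ∏ i, volume (Function.update C k E i) := volume_pi_pi _
      rw [hprod, ← Finset.mul_prod_erase Finset.univ _ (Finset.mem_univ k),
        Function.update_self]
      calc volume E * ∏ i ∈ Finset.univ.erase k, volume (Function.update C k E i)
          ≤ volume E * 1 := by
            apply mul_le_mul_right
            apply Finset.prod_le_one (fun i _ => by simp)
            intro i hi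
            rw [Function.update_of_ne (Finset.mem_erase.mp hi).1]
            calc volume (C i) ≤ volume (Set.Icc (0:ℝ) 1) := measure_mono (hC01 i)
            _ = 1 := by simp [Real.volume_Icc]
        _ = volume E := mul_one _
        _ < δ := hEv
    have hvan : ∀ A, A ⊆ S → MeasurableSet A → volume A = ENNReal.ofReal (α k) → ν A = 0 := by
      intro A hAS hAm hAv
      apply ih (Function.update C k A) (meas_update hCm hAm)
      · intro i
        rcases eq_or_ne i k with rfl | h
        · simpa using hAS.trans hS01
        · rw [Function.update_of_ne h]; exact hC01 i
      · intro i j hij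
        have hdisjA : ∀ j', j' ≠ k → Disjoint A (C j') := by
          intro j' hj'
          rw [Set.disjoint_left]
          intro x hxA hxC
          exact (hAS hxA).2 (Set.mem_biUnion (Finset.mem_erase.mpr ⟨hj', Finset.mem_univ j'⟩) hxC)
        rcases eq_or_ne i k with rfl | hi
        · rw [Function.update_self, Function.update_of_ne (Ne.symm hij)]
          exact hdisjA j (Ne.symm hij)
        · rw [Function.update_of_ne hi]
          rcases eq_or_ne j k with rfl | hj
          · rw [Function.update_self]
            exact (hdisjA i hi).symm
          · rw [Function.update_of_ne hj]
            exact hCd i j hij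
      · intro i hiT
        rcases eq_or_ne i k with rfl | h
        · rwa [Function.update_self]
        · rw [Function.update_of_ne h]
          exact hCeq i (by simp [h, hiT])
      · intro i hiT
        have h : i ≠ k := fun hik => hkT (hik ▸ hiT)
        rw [Function.update_of_ne h]
        exact hCle i (Finset.mem_insert_of_mem hiT)
    have := key1D hSm hS01 (ENNReal.ofReal_pos.mpr (hα k).1).ne' hvolS hadd hcont hvan
      (C k) hCkS (hCm k)
    rw [hνdef] at this
    simp only at this
    rwa [Function.update_eq_self] at this

end Bridge



section Bridge

variable {m : ℕ}

variable (α : Fin m → ℝ) (f : (Fin m → ℝ) → ℂ)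

lemma lemB (hα : ∀ i, α i ∈ Set.Ioo (0:ℝ) 1) (hsum : ∑ i, α i < 1)
    (hf : IntegrableOn f (unitCube m))
    (hyp : ∀ A : Fin m → Set ℝ, (∀ i, MeasurableSet (A i)) →
      (∀ i, A i ⊆ Set.Icc (0:ℝ) 1) →
      (∀ i j, i ≠ j → Disjoint (A i) (A j)) →
      (∀ i, volume (A i) = ENNReal.ofReal (α i)) →
      ∫ x in Set.univ.pi A, f x = 0) :
    ∀ B : Fin m → Set ℝ, (∀ i, MeasurableSet (B i)) → (∀ i, B i ⊆ Set.Icc (0:ℝ) 1) →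
      ∫ x in Set.univ.pi B, f x = 0 := by
  classical
  intro B hBm hB01
  set B' : Fin m → Set ℝ := fun i => B i ∩ Set.Ico 0 1 with hB'def
  have hB'm : ∀ i, MeasurableSet (B' i) := fun i => (hBm i).inter measurableSet_Ico
  have hB'sub : ∀ i, B' i ⊆ B i := fun i => Set.inter_subset_left
  -- reduce to B'
  have hnull : volume (Set.univ.pi B \ Set.univ.pi B') = 0 := by
    have hsub : Set.univ.pi B \ Set.univ.pi B' ⊆
        ⋃ i, Set.univ.pi (Function.update (fun _ : Fin m => Set.Icc (0:ℝ) 1) i {1}) := by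
      rintro x ⟨hx1, hx2⟩
      rw [Set.mem_univ_pi] at hx1
      have : ∃ i, x i ∉ B' i := by
        by_contra h
        push_neg at h
        exact hx2 (Set.mem_univ_pi.mpr h)
      obtain ⟨i, hi⟩ := this
      have hxi : x i ∈ Set.Icc (0:ℝ) 1 := hB01 i (hx1 i)
      have hx1' : x i = 1 := by
        rcases hxi with ⟨h0, h1⟩
        rcases eq_or_lt_of_le h1 with h | h
        · exact h
        · exact absurd ⟨hx1 i, h0, h⟩ hi
      apply Set.mem_iUnion.mpr ⟨i, ?_⟩
      rw [mem_pi_update]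
      exact ⟨by simp [hx1'], fun j _ => hB01 j (hx1 j)⟩
    apply measure_mono_null hsub
    apply measure_iUnion_null
    intro i
    rw [volume_pi_pi]
    apply Finset.prod_eq_zero (Finset.mem_univ i)
    simp
  have hred : ∫ x in Set.univ.pi B, f x = ∫ x in Set.univ.pi B', f x := by
    apply setIntegral_congr_set
    rw [ae_eq_set]
    constructor
    · exact hnull
    · have hemp : Set.univ.pi B' \ Set.univ.pi B = ∅ :=
        Set.diff_eq_empty.mpr (Set.pi_mono fun i _ => hB'sub i)
      simp [hemp]
  rw [hred]
  -- it suffices to bound by every ε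
  have key : ∀ ε : ℝ, 0 < ε → ‖∫ x in Set.univ.pi B', f x‖ < ε := by
    intro ε hε
    obtain ⟨δ, hδ0, hδ⟩ := gcont hf ε hε
    set δ' := min δ 1 with hδ'def
    have hδ'0 : 0 < δ' := lt_min hδ0 (by norm_num)
    have hδ'ne : δ' ≠ ∞ := ((min_le_right _ _).trans_lt (by norm_num)).ne
    have hδ'R : 0 < δ'.toReal := ENNReal.toReal_pos hδ'0.ne' hδ'ne
    obtain ⟨n, hn⟩ := exists_nat_gt (∑ i, 1/(α i) + (m*m : ℝ)/δ'.toReal)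
    have hsum_nonneg : (0:ℝ) ≤ ∑ i, 1/(α i) :=
      Finset.sum_nonneg fun i _ => one_div_nonneg.mpr (hα i).1.le
    have hm2_nonneg : (0:ℝ) ≤ (m*m : ℝ)/δ'.toReal := by positivity
    have hnpos : 0 < n := by
      by_contra h
      push_neg at h
      interval_cases n
      simp only [Nat.cast_zero] at hn
      linarith
    have hnR : (0:ℝ) < n := by exact_mod_cast hnpos
    have hα_n : ∀ i, 1/(n:ℝ) < α i := by
      intro i
      have h1 : 1/(α i) ≤ ∑ j, 1/(α j) :=
        Finset.single_le_sum (f := fun j => 1/(α j))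
          (fun j _ => one_div_nonneg.mpr (hα j).1.le) (Finset.mem_univ i)
      have h2 : 1/(α i) < n := by linarith
      rw [div_lt_iff₀ (hα i).1] at h2
      rw [div_lt_iff₀ hnR]
      nlinarith [(hα i).1]
    have hm2n : (m*m : ℝ)/(n:ℝ) < δ'.toReal := by
      have h2 : (m*m:ℝ)/δ'.toReal < n := by linarith
      rw [div_lt_iff₀ hδ'R] at h2
      rw [div_lt_iff₀ hnR]
      nlinarith
    -- the intervals
    set J : Fin n → Set ℝ := fun r => Set.Ico ((r:ℝ)/n) (((r:ℝ)+1)/n) with hJdef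
    have hJv : ∀ r, volume (J r) = ENNReal.ofReal (1/n) := by
      intro r
      rw [hJdef]
      simp only [Real.volume_Ico]
      congr 1
      field_simp
      ring
    have hJd : ∀ r s : Fin n, r ≠ s → Disjoint (J r) (J s) := by
      intro r s hrs
      rw [hJdef]
      simp only [Set.Ico_disjoint_Ico]
      have hkey : ∀ a b : ℕ, a < b → ((a:ℝ)+1)/n ≤ (b:ℝ)/n := by
        intro a b h
        gcongr
        exact_mod_cast h
      have : (r:ℕ) ≠ (s:ℕ) := fun h => hrs (Fin.ext h)
      rcases this.lt_or_gt with h | h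
      · exact (min_le_left _ _).trans ((hkey _ _ h).trans (le_max_right _ _))
      · exact (min_le_right _ _).trans ((hkey _ _ h).trans (le_max_left _ _))
    have hJcover : Set.Ico (0:ℝ) 1 ⊆ ⋃ r, J r := by
      rintro t ⟨ht0, ht1⟩
      have htn : 0 ≤ t * n := by positivity
      have hlt : ⌊t * n⌋₊ < n := by
        rw [Nat.floor_lt htn]
        nlinarith
      apply Set.mem_iUnion.mpr ⟨⟨⌊t * n⌋₊, hlt⟩, ?_⟩
      rw [hJdef]
      constructor
      · simp only
        rw [div_le_iff₀ hnR]
        exact Nat.floor_le htn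
      · simp only
        rw [lt_div_iff₀ hnR]
        exact Nat.lt_floor_add_one (t * n)
    -- the decomposition
    set piC : (Fin m → Fin n) → Set (Fin m → ℝ) :=
      fun κ => Set.univ.pi (fun i => B' i ∩ J (κ i)) with hpiCdef
    have hpiCm : ∀ κ, MeasurableSet (piC κ) :=
      fun κ => MeasurableSet.univ_pi fun i => (hB'm i).inter measurableSet_Ico
    have hpiCsub : ∀ κ, piC κ ⊆ unitCube m := by
      intro κ
      apply Set.pi_mono
      intro i _
      exact (Set.inter_subset_left.trans (hB'sub i)).trans (hB01 i)
    have hdecomp : Set.univ.pi B' = ⋃ κ ∈ (Finset.univ : Finset (Fin m → Fin n)), piC κ := by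
      ext x
      constructor
      · intro hx
        rw [Set.mem_univ_pi] at hx
        have hex : ∀ i, ∃ r, x i ∈ J r := by
          intro i
          exact Set.mem_iUnion.mp (hJcover (hx i).2)
        choose κ hκ using hex
        exact Set.mem_biUnion (Finset.mem_univ κ)
          (Set.mem_univ_pi.mpr fun i => ⟨hx i, hκ i⟩)
      · intro hx
        obtain ⟨κ, _, hxκ⟩ := Set.mem_iUnion₂.mp hx
        exact Set.pi_mono (fun i _ => Set.inter_subset_left) hxκ
    have hpiCd : ∀ κ κ' : Fin m → Fin n, κ ≠ κ' → Disjoint (piC κ) (piC κ') := by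
      intro κ κ' hne
      obtain ⟨i, hi⟩ := Function.ne_iff.mp hne
      rw [Set.disjoint_left]
      intro x hx hx'
      have h1 := (Set.mem_univ_pi.mp hx i).2
      have h2 := (Set.mem_univ_pi.mp hx' i).2
      exact Set.disjoint_left.mp (hJd _ _ hi) h1 h2
    have hsplit : ∫ x in Set.univ.pi B', f x = ∑ κ : Fin m → Fin n, ∫ x in piC κ, f x := by
      rw [hdecomp]
      rw [integral_biUnion_finset Finset.univ (fun κ _ => hpiCm κ)
        (fun κ _ κ' _ h => hpiCd κ κ' h) (fun κ _ => hf.mono_set (hpiCsub κ))]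
    -- injective terms vanish
    have hinj : ∀ κ : Fin m → Fin n, Function.Injective κ → ∫ x in piC κ, f x = 0 := by
      intro κ hκinj
      refine lemA α f hα hsum hf hyp Finset.univ _
        (fun i => (hB'm i).inter measurableSet_Ico)
        (fun i => Set.inter_subset_left.trans ((hB'sub i).trans (hB01 i)))
        (fun i j hij => Set.disjoint_of_subset Set.inter_subset_right Set.inter_subset_right
          (hJd _ _ (fun h => hij (hκinj h))))
        (fun i hi => absurd (Finset.mem_univ i) hi)
        (fun i _ => ?_)
      calc volume (B' i ∩ J (κ i)) ≤ volume (J (κ i)) := measure_mono Set.inter_subset_right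
      _ = ENNReal.ofReal (1/n) := hJv _
      _ ≤ ENNReal.ofReal (α i) := ENNReal.ofReal_le_ofReal (hα_n i).le
    -- non-injective part
    set NI : Finset (Fin m → Fin n) :=
      Finset.univ.filter (fun κ => ¬ Function.Injective κ) with hNIdef
    set NU : Set (Fin m → ℝ) := ⋃ κ ∈ NI, piC κ with hNUdef
    have hNUm : MeasurableSet NU := NI.measurableSet_biUnion fun κ _ => hpiCm κ
    have hNUsub : NU ⊆ unitCube m := Set.iUnion₂_subset fun κ _ => hpiCsub κ
    have hNUeq : ∫ x in Set.univ.pi B', f x = ∫ x in NU, f x := by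
      rw [hsplit, hNUdef]
      rw [integral_biUnion_finset NI (fun κ _ => hpiCm κ)
        (fun κ _ κ' _ h => hpiCd κ κ' h) (fun κ _ => hf.mono_set (hpiCsub κ))]
      rw [← Finset.sum_filter_add_sum_filter_not Finset.univ (fun κ => Function.Injective κ)
        (fun κ => ∫ x in piC κ, f x)]
      rw [Finset.sum_eq_zero (fun κ hκ => hinj κ (Finset.mem_filter.mp hκ).2), zero_add]
    -- the fat diagonal bound
    have hNUvol : volume NU < δ := by
      set Dset : Fin m × Fin m → Fin n → Set (Fin m → ℝ) := fun p r =>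
        Set.univ.pi (fun i => if i = p.1 ∨ i = p.2 then J r else Set.Icc (0:ℝ) 1) with hDdef
      have hDsub : NU ⊆ ⋃ (p : Fin m × Fin m), ⋃ (_ : p.1 ≠ p.2), ⋃ (r : Fin n), Dset p r := by
        intro x hx
        obtain ⟨κ, hκ, hxκ⟩ := Set.mem_iUnion₂.mp hx
        have hκni : ¬ Function.Injective κ := (Finset.mem_filter.mp hκ).2
        rw [Function.not_injective_iff] at hκni
        obtain ⟨i, j, hκij, hij⟩ := hκni
        apply Set.mem_iUnion.mpr ⟨(i, j), _⟩
        apply Set.mem_iUnion.mpr ⟨hij, _⟩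
        apply Set.mem_iUnion.mpr ⟨κ i, _⟩
        rw [hDdef, Set.mem_univ_pi]
        intro l
        have hxl := Set.mem_univ_pi.mp hxκ l
        by_cases hl : l = i ∨ l = j
        · rw [if_pos hl]
          rcases hl with rfl | rfl
          · exact hxl.2
          · rw [hκij]; exact hxl.2
        · rw [if_neg hl]
          exact (hB'sub l).trans (hB01 l) hxl.1
      have hJ1 : ∀ r, volume (J r) ≤ 1 := by
        intro r
        rw [hJv r, ← ENNReal.ofReal_one]
        apply ENNReal.ofReal_le_ofReal
        rw [div_le_iff₀ hnR]
        simpa using (Nat.one_le_cast (α := ℝ)).mpr hnpos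
      have hDvol : ∀ (p : Fin m × Fin m) (r : Fin n), p.1 ≠ p.2 →
          volume (Dset p r) ≤ ENNReal.ofReal (1/n) * ENNReal.ofReal (1/n) := by
        intro p r hp
        rw [hDdef]
        simp only
        rw [volume_pi_pi]
        rw [← Finset.mul_prod_erase Finset.univ _ (Finset.mem_univ p.1)]
        rw [← Finset.mul_prod_erase _ _
          (Finset.mem_erase.mpr ⟨Ne.symm hp, Finset.mem_univ p.2⟩)]
        have h1 : volume (if p.1 = p.1 ∨ p.1 = p.2 then J r else Set.Icc (0:ℝ) 1)
            = ENNReal.ofReal (1/n) := by rw [if_pos (Or.inl rfl)]; exact hJv r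
        have h2 : volume (if p.2 = p.1 ∨ p.2 = p.2 then J r else Set.Icc (0:ℝ) 1)
            = ENNReal.ofReal (1/n) := by rw [if_pos (Or.inr rfl)]; exact hJv r
        rw [h1, h2, ← mul_assoc]
        apply mul_le_of_le_one_right'
        apply Finset.prod_le_one (fun i _ => by simp)
        intro i _
        split_ifs
        · exact hJ1 r
        · simp [Real.volume_Icc]
      have hbound : volume NU ≤
          ((m*m : ℕ) : ℝ≥0∞) * (((n:ℕ) : ℝ≥0∞) * (ENNReal.ofReal (1/n) * ENNReal.ofReal (1/n))) := by
        refine le_trans (measure_mono hDsub) ?_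
        refine le_trans (measure_iUnion_le _) ?_
        rw [tsum_fintype]
        have hcard : (Finset.univ : Finset (Fin m × Fin m)).card = m*m := by
          simp
        calc ∑ p : Fin m × Fin m, volume (⋃ (_ : p.1 ≠ p.2), ⋃ (r : Fin n), Dset p r)
            ≤ ∑ _p : Fin m × Fin m,
              (((n:ℕ) : ℝ≥0∞) * (ENNReal.ofReal (1/n) * ENNReal.ofReal (1/n))) := by
              apply Finset.sum_le_sum
              intro p _
              by_cases hp : p.1 = p.2
              · simp [hp]
              · refine le_trans (measure_mono (Set.iUnion_subset fun _ => subset_rfl)) ?_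
                refine le_trans (measure_iUnion_le _) ?_
                rw [tsum_fintype]
                calc ∑ r : Fin n, volume (Dset p r)
                    ≤ ∑ _r : Fin n, ENNReal.ofReal (1/n) * ENNReal.ofReal (1/n) :=
                      Finset.sum_le_sum (fun r _ => hDvol p r hp)
                  _ = ((n:ℕ) : ℝ≥0∞) * (ENNReal.ofReal (1/n) * ENNReal.ofReal (1/n)) := by
                      rw [Finset.sum_const, Finset.card_univ, Fintype.card_fin, nsmul_eq_mul]
          _ = ((m*m : ℕ) : ℝ≥0∞) * (((n:ℕ) : ℝ≥0∞) * (ENNReal.ofReal (1/n) * ENNReal.ofReal (1/n))) := by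
              rw [Finset.sum_const, hcard, nsmul_eq_mul]
      have hcompute : ((m*m : ℕ) : ℝ≥0∞) * (((n:ℕ) : ℝ≥0∞) * (ENNReal.ofReal (1/n) * ENNReal.ofReal (1/n)))
          = ENNReal.ofReal ((m*m : ℝ)/n) := by
        rw [← ENNReal.ofReal_natCast (m*m), ← ENNReal.ofReal_natCast n,
          ← ENNReal.ofReal_mul (by positivity), ← ENNReal.ofReal_mul (by positivity),
          ← ENNReal.ofReal_mul (by positivity)]
        congr 1
        push_cast
        field_simp
      calc volume NU ≤ ENNReal.ofReal ((m*m : ℝ)/n) := by rw [← hcompute]; exact hbound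
      _ < δ' := by
          rw [ENNReal.ofReal_lt_iff_lt_toReal (by positivity) hδ'ne]
          exact hm2n
      _ ≤ δ := min_le_left _ _
    rw [hNUeq]
    exact hδ NU hNUm hNUsub hNUvol
  rw [← norm_eq_zero]
  by_contra hne
  have hpos : 0 < ‖(∫ x in Set.univ.pi B', f x)‖ := lt_of_le_of_ne (norm_nonneg _) (Ne.symm hne)
  exact absurd (key _ hpos) (lt_irrefl _)

end Bridge



variable {m : ℕ}

/-- when `Σ α_i < 1`, the only integrable `f` whose integral over all products
of disjoint sets of measures `α_1, …, α_m` vanishes is `f = 0` a.e. -/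
theorem vanishing_averages_sum_lt_one {m : ℕ} (α : Fin m → ℝ)
    (hα : ∀ i, α i ∈ Set.Ioo (0:ℝ) 1) (hsum : ∑ i, α i < 1)
    (f : (Fin m → ℝ) → ℂ) (hf : IntegrableOn f (unitCube m)) :
    (∀ A : Fin m → Set ℝ, (∀ i, MeasurableSet (A i)) →
      (∀ i, A i ⊆ Set.Icc (0:ℝ) 1) →
      (∀ i j, i ≠ j → Disjoint (A i) (A j)) →
      (∀ i, volume (A i) = ENNReal.ofReal (α i)) →
      ∫ x in Set.univ.pi A, f x = 0)
    ↔ (∀ᵐ x ∂(volume.restrict (unitCube m)), f x = 0) := by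
  constructor
  · intro hyp
    have hB := lemB α f hα hsum hf hyp
    have hP : ∀ ⦃t : Set (Fin m → ℝ)⦄, MeasurableSet t →
        ∫ x in t, f x ∂(volume.restrict (unitCube m)) = 0 := by
      have hgen : (inferInstance : MeasurableSpace (Fin m → ℝ)) =
          MeasurableSpace.generateFrom
            (Set.pi Set.univ '' Set.pi Set.univ fun _ : Fin m => {s : Set ℝ | MeasurableSet s}) :=
        generateFrom_pi.symm
      have htot : ∫ x, f x ∂(volume.restrict (unitCube m)) = 0 := by
        have h1 : ∫ x, f x ∂(volume.restrict (unitCube m)) = ∫ x in unitCube m, f x := rfl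
        rw [h1, unitCube]
        exact hB _ (fun _ => measurableSet_Icc) (fun _ => subset_rfl)
      refine MeasurableSpace.induction_on_inter
        (C := fun t _ => ∫ x in t, f x ∂(volume.restrict (unitCube m)) = 0)
        hgen isPiSystem_pi ?_ ?_ ?_ ?_
      · simp
      · rintro t ⟨s, hs, rfl⟩
        have hsm : ∀ i, MeasurableSet (s i) := fun i => hs i (Set.mem_univ i)
        rw [Measure.restrict_restrict (MeasurableSet.univ_pi hsm)]
        have hinter : Set.univ.pi s ∩ unitCube m =
            Set.univ.pi (fun i => s i ∩ Set.Icc 0 1) := by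
          rw [unitCube, ← Set.pi_inter_distrib]
        rw [hinter]
        exact hB _ (fun i => (hsm i).inter measurableSet_Icc) (fun i => Set.inter_subset_right)
      · intro t htm ht
        have h2 := integral_add_compl htm (hf : Integrable f (volume.restrict (unitCube m)))
        rw [ht, zero_add] at h2
        rw [h2, htot]
      · intro g hgd hgm hgP
        rw [integral_iUnion hgm hgd (Integrable.integrableOn
          (hf : Integrable f (volume.restrict (unitCube m))))]
        simp [hgP]
    have hae := Integrable.ae_eq_zero_of_forall_setIntegral_eq_zero
      (hf : Integrable f (volume.restrict (unitCube m))) (fun s hs _ => hP hs)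
    filter_upwards [hae] with x hx
    simpa using hx
  · intro h0 A hAm hA01 hAd hAv
    have hsub : Set.univ.pi A ⊆ unitCube m := Set.pi_mono fun i _ => hA01 i
    have hmeas : MeasurableSet (Set.univ.pi A) := MeasurableSet.univ_pi hAm
    have hrr : ∫ x in Set.univ.pi A, f x
        = ∫ x in Set.univ.pi A, f x ∂(volume.restrict (unitCube m)) := by
      rw [Measure.restrict_restrict hmeas, Set.inter_eq_self_of_subset_left hsub]
    rw [hrr]
    have h0' : ∀ᵐ x ∂(volume.restrict (unitCube m)).restrict (Set.univ.pi A), f x = 0 :=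
      ae_restrict_of_ae h0
    have hfeq : f =ᵐ[(volume.restrict (unitCube m)).restrict (Set.univ.pi A)]
        (fun _ => (0:ℂ)) := by
      filter_upwards [h0'] with x hx using hx
    rw [integral_congr_ae hfeq]
    simp
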